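/- Let (X, γ) be a generalized Minkowski space, let p₁, …, pₙ ∈ X be distinct, and let f : X → ℝ, f(x) = Σᵢ₌₁ⁿ γ(pᵢ − x). A point p_j (1 ≤ j ≤ n) is a minimum point of f if and only if, for every i ∈ {1, …, n} with i ≠ j, there exists a γ-norming functional φᵢ of pᵢ − p_j such that γ°(−Σ_{i≠j} φᵢ) ≤ 1. -/

import Mathlib

open Set Pointwise

/-- A gauge on a real vector space: nonnegative, definite at `0`, positively homogeneous,
and subadditive. -/
def IsGauge {X : Type*} [AddCommGroup X] [Module ℝ X] (γ : X → ℝ) : Prop :=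
  (∀ x, 0 ≤ γ x) ∧ (∀ x : X, γ x = 0 → x = 0) ∧
    (∀ (l : ℝ) (x : X), 0 ≤ l → γ (l • x) = l * γ x) ∧
    ∀ x y, γ (x + y) ≤ γ x + γ y

/-- The polar function of a gauge, `γ°(φ) = sup {φ x : γ x ≤ 1}`. -/
noncomputable def gaugePolar {X : Type*} [AddCommGroup X] [Module ℝ X]
    (γ : X → ℝ) (φ : X →ₗ[ℝ] ℝ) : ℝ :=
  sSup (φ '' {x | γ x ≤ 1})

/-- `φ` is a `γ`-norming functional of `x`: `γ°(φ) = 1` and `φ x = γ x`. -/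
def IsNormingFunctional {X : Type*} [AddCommGroup X] [Module ℝ X]
    (γ : X → ℝ) (φ : X →ₗ[ℝ] ℝ) (x : X) : Prop :=
  gaugePolar γ φ = 1 ∧ φ x = γ x



section Sandwich

variable {X : Type*} [AddCommGroup X] [Module ℝ X]

/-- Sandwich theorem: a superlinear function below a sublinear function can be
separated by a linear functional. -/
lemma gauge_sandwich (g h : X → ℝ)
    (hg_add : ∀ x y, g x + g y ≤ g (x + y))
    (hg_hom : ∀ c : ℝ, 0 < c → ∀ x, g (c • x) = c * g x)
    (hh_add : ∀ x y, h (x + y) ≤ h x + h y)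
    (hh_hom : ∀ c : ℝ, 0 < c → ∀ x, h (c • x) = c * h x)
    (hle : ∀ x, g x ≤ h x) :
    ∃ φ : X →ₗ[ℝ] ℝ, (∀ x, g x ≤ φ x) ∧ (∀ x, φ x ≤ h x) := by
  have h0 : h 0 = 0 := by
    have := hh_hom 2 two_pos 0; rw [smul_zero] at this; linarith
  have g0 : g 0 = 0 := by
    have := hg_hom 2 two_pos 0; rw [smul_zero] at this; linarith
  set r : X → ℝ := fun v => sInf ((fun x => h (v + x) - g x) '' univ) with hr
  have hbdd : ∀ v, ∀ z ∈ ((fun x => h (v + x) - g x) '' (univ : Set X)), g v ≤ z := by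
    rintro v z ⟨x, -, rfl⟩
    have h1 := hg_add v x
    have h2 := hle (v + x)
    simp only
    linarith
  have hne : ∀ v, ((fun x => h (v + x) - g x) '' (univ : Set X)).Nonempty :=
    fun v => ⟨h (v + 0) - g 0, ⟨0, trivial, rfl⟩⟩
  have hrle : ∀ v x, r v ≤ h (v + x) - g x := fun v x =>
    csInf_le ⟨g v, fun z hz => hbdd v z hz⟩ ⟨x, trivial, rfl⟩
  have hrge : ∀ v, g v ≤ r v := fun v => le_csInf (hne v) (hbdd v)
  have hr_h : ∀ v, r v ≤ h v := by
    intro v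
    have := hrle v 0
    rw [add_zero, g0] at this
    linarith
  have hr_hom : ∀ c : ℝ, 0 < c → ∀ v, r (c • v) = c * r v := by
    intro c hc v
    have himg : ((fun x => h (c • v + x) - g x) '' univ)
        = c • ((fun x => h (v + x) - g x) '' univ) := by
      ext z
      constructor
      · rintro ⟨x, -, rfl⟩
        refine ⟨h (v + c⁻¹ • x) - g (c⁻¹ • x), ⟨c⁻¹ • x, trivial, rfl⟩, ?_⟩
        have hx : c • v + x = c • (v + c⁻¹ • x) := by
          rw [smul_add, smul_inv_smul₀ hc.ne']
        show c • (h (v + c⁻¹ • x) - g (c⁻¹ • x)) = h (c • v + x) - g x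
        have hgx : g x = c * g (c⁻¹ • x) := by
          rw [← hg_hom c hc, smul_inv_smul₀ hc.ne']
        rw [smul_eq_mul, hx, hh_hom c hc, hgx]; ring
      · rintro ⟨z, ⟨x, -, rfl⟩, rfl⟩
        refine ⟨c • x, trivial, ?_⟩
        have hx : c • v + c • x = c • (v + x) := (smul_add c v x).symm
        show h (c • v + c • x) - g (c • x) = c • (h (v + x) - g x)
        rw [smul_eq_mul, hx, hh_hom c hc, hg_hom c hc]; ring
    rw [hr]
    simp only
    rw [himg, Real.sInf_smul_of_nonneg hc.le, smul_eq_mul]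
  have hr_add : ∀ v w, r (v + w) ≤ r v + r w := by
    intro v w
    have key : ∀ x y, r (v + w) ≤ (h (v + x) - g x) + (h (w + y) - g y) := by
      intro x y
      have h1 := hrle (v + w) (x + y)
      have h2 := hh_add (v + x) (w + y)
      have h3 := hg_add x y
      have he : v + w + (x + y) = v + x + (w + y) := by abel
      rw [he] at h1
      linarith
    have step1 : ∀ x, r (v + w) - (h (v + x) - g x) ≤ r w := by
      intro x
      refine le_csInf (hne w) ?_
      rintro z ⟨y, -, rfl⟩
      have := key x y
      simp only
      linarith
    have step2 : r (v + w) - r w ≤ r v := by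
      refine le_csInf (hne v) ?_
      rintro z ⟨x, -, rfl⟩
      have := step1 x
      simp only
      linarith
    linarith
  have hbot : ∀ x : ((⊥ : Submodule ℝ X) : Submodule ℝ X),
      (⟨⊥, 0⟩ : X →ₗ.[ℝ] ℝ) x ≤ r x := by
    rintro ⟨x, hx⟩
    have hx0 : x = 0 := (Submodule.mem_bot ℝ).1 hx
    simp only [LinearPMap.mk_apply, LinearMap.zero_apply, hx0]
    have := hrge 0
    linarith
  obtain ⟨φ, -, hφ⟩ := exists_extension_of_le_sublinear ⟨⊥, 0⟩ r hr_hom hr_add hbot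
  refine ⟨φ, ?_, fun v => (hφ v).trans (hr_h v)⟩
  intro v
  have h1 : φ (-v) ≤ r (-v) := hφ (-v)
  have h2 : r (-v) ≤ h (-v + v) - g v := hrle (-v) v
  rw [neg_add_cancel, h0] at h2
  have h3 : φ (-v) = -φ v := map_neg φ v
  linarith

end Sandwich

section SumRule

variable {X : Type*} [AddCommGroup X] [Module ℝ X]

/-- Decomposition (subdifferential sum rule at `0`): a superlinear function dominated by a
finite sum of sublinear functions is dominated by a sum of linear functionals, each dominated
by the corresponding sublinear function. -/
lemma gauge_sumrule {ι : Type*} [DecidableEq ι] (s : Finset ι) (h : ι → X → ℝ) :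
    (∀ i ∈ s, ∀ x y, h i (x + y) ≤ h i x + h i y) →
    (∀ i ∈ s, ∀ c : ℝ, 0 < c → ∀ x, h i (c • x) = c * h i x) →
    ∀ g : X → ℝ, (∀ x y, g x + g y ≤ g (x + y)) →
      (∀ c : ℝ, 0 < c → ∀ x, g (c • x) = c * g x) →
      (∀ v, g v ≤ ∑ i ∈ s, h i v) →
      ∃ φ : ι → (X →ₗ[ℝ] ℝ), (∀ i ∈ s, ∀ v, (φ i) v ≤ h i v) ∧
        ∀ v, g v ≤ ∑ i ∈ s, (φ i) v := by
  classical
  induction s using Finset.induction_on with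
  | empty =>
    intro _ _ g _ _ hg
    exact ⟨0, by simp, by simpa using hg⟩
  | @insert a s ha ih =>
    intro hh_add hh_hom g hg_add hg_hom hle
    set g1 : X → ℝ := fun v => g v - ∑ i ∈ s, h i v with hg1
    have hg1_add : ∀ x y, g1 x + g1 y ≤ g1 (x + y) := by
      intro x y
      have h1 := hg_add x y
      have hs : ∑ i ∈ s, h i (x + y) ≤ ∑ i ∈ s, (h i x + h i y) :=
        Finset.sum_le_sum fun i hi => hh_add i (Finset.mem_insert_of_mem hi) x y
      rw [Finset.sum_add_distrib] at hs
      simp only [hg1]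
      linarith
    have hg1_hom : ∀ c : ℝ, 0 < c → ∀ x, g1 (c • x) = c * g1 x := by
      intro c hc x
      simp only [hg1]
      rw [hg_hom c hc]
      have : ∑ i ∈ s, h i (c • x) = ∑ i ∈ s, c * h i x :=
        Finset.sum_congr rfl fun i hi => hh_hom i (Finset.mem_insert_of_mem hi) c hc x
      rw [this, ← Finset.mul_sum]
      ring
    have hg1_le : ∀ v, g1 v ≤ h a v := by
      intro v
      have := hle v
      rw [Finset.sum_insert ha] at this
      simp only [hg1]
      linarith
    obtain ⟨φa, hφa1, hφa2⟩ := gauge_sandwich g1 (h a) hg1_add hg1_hom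
      (hh_add a (Finset.mem_insert_self a s))
      (hh_hom a (Finset.mem_insert_self a s)) hg1_le
    set g2 : X → ℝ := fun v => g v - φa v with hg2
    have hg2_add : ∀ x y, g2 x + g2 y ≤ g2 (x + y) := by
      intro x y
      have h1 := hg_add x y
      have h2 : φa (x + y) = φa x + φa y := map_add φa x y
      simp only [hg2]
      linarith
    have hg2_hom : ∀ c : ℝ, 0 < c → ∀ x, g2 (c • x) = c * g2 x := by
      intro c hc x
      simp only [hg2]
      rw [hg_hom c hc, map_smul, smul_eq_mul]
      ring
    have hg2_le : ∀ v, g2 v ≤ ∑ i ∈ s, h i v := by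
      intro v
      have := hφa1 v
      simp only [hg1] at this
      simp only [hg2]
      linarith
    obtain ⟨ψ, hψ1, hψ2⟩ := ih (fun i hi => hh_add i (Finset.mem_insert_of_mem hi))
      (fun i hi => hh_hom i (Finset.mem_insert_of_mem hi)) g2 hg2_add hg2_hom hg2_le
    refine ⟨Function.update ψ a φa, ?_, ?_⟩
    · intro i hi v
      rcases Finset.mem_insert.1 hi with rfl | hi'
      · rw [Function.update_self]; exact hφa2 v
      · rw [Function.update_of_ne (by rintro rfl; exact ha hi') ]
        exact hψ1 i hi' v
    · intro v
      rw [Finset.sum_insert ha, Function.update_self]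
      have hsum : ∑ i ∈ s, (Function.update ψ a φa i) v = ∑ i ∈ s, (ψ i) v := by
        refine Finset.sum_congr rfl fun i hi => ?_
        rw [Function.update_of_ne (by rintro rfl; exact ha hi)]
      rw [hsum]
      have := hψ2 v
      simp only [hg2] at this
      linarith

end SumRule

/-- For finitely many functions on `(0, ∞)` that are monotone, one can find a single `t`
at which all of them are within `ε` of their infima. -/
lemma exists_forall_le_sInf_add {ι : Type*} (s : Finset ι) (F : ι → ℝ → ℝ) :
    (∀ i ∈ s, ∀ a b : ℝ, 0 < a → a ≤ b → F i a ≤ F i b) →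
    ∀ ε : ℝ, 0 < ε →
    ∃ t : ℝ, 0 < t ∧ ∀ i ∈ s, F i t ≤ sInf (F i '' Ioi 0) + ε := by
  classical
  induction s using Finset.induction_on with
  | empty => intro _ ε hε; exact ⟨1, one_pos, by simp⟩
  | @insert a s ha ih =>
    intro hmono ε hε
    obtain ⟨t, ht, hts⟩ := ih (fun i hi => hmono i (Finset.mem_insert_of_mem hi)) ε hε
    have hne : (F a '' Ioi 0).Nonempty := ⟨F a 1, 1, by norm_num, rfl⟩
    have hlt : sInf (F a '' Ioi 0) < sInf (F a '' Ioi 0) + ε := lt_add_of_pos_right _ hε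
    obtain ⟨z, ⟨ta, hta, rfl⟩, hz⟩ := exists_lt_of_csInf_lt hne hlt
    have htmin : 0 < min t ta := lt_min ht hta
    refine ⟨min t ta, htmin, ?_⟩
    intro i hi
    rcases Finset.mem_insert.1 hi with rfl | hi'
    · exact le_trans (hmono i (Finset.mem_insert_self i s) _ _ htmin (min_le_right _ _)) hz.le
    · exact le_trans (hmono i (Finset.mem_insert_of_mem hi') _ _ htmin (min_le_left _ _))
        (hts i hi')

section GaugeBasics

variable {X : Type*} [AddCommGroup X] [Module ℝ X] {γ : X → ℝ}

lemma IsGauge.zero (hγ : IsGauge γ) : γ 0 = 0 := by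
  have := hγ.2.2.1 0 0 le_rfl
  rwa [zero_smul, zero_mul] at this

lemma IsGauge.combo (hγ : IsGauge γ) {a b : ℝ} (ha : 0 ≤ a) (hb : 0 ≤ b) (u w : X) :
    γ (a • u + b • w) ≤ a * γ u + b * γ w := by
  calc γ (a • u + b • w) ≤ γ (a • u) + γ (b • w) := hγ.2.2.2 _ _
    _ = a * γ u + b * γ w := by rw [hγ.2.2.1 a u ha, hγ.2.2.1 b w hb]

/-- If `φ ≤ γ` pointwise then the polar of `φ` is at most `1`. -/
lemma polar_le_one_of_le {φ : X →ₗ[ℝ] ℝ} (hγ : IsGauge γ) (hle : ∀ x, φ x ≤ γ x) :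
    gaugePolar γ φ ≤ 1 := by
  refine Real.sSup_le ?_ zero_le_one
  rintro z ⟨x, hx, rfl⟩
  exact (hle x).trans hx

/-- If `φ ≤ γ` pointwise, `φ x₀ = γ x₀` and `x₀ ≠ 0`, then `φ` is a norming functional. -/
lemma isNormingFunctional_of (hγ : IsGauge γ) {φ : X →ₗ[ℝ] ℝ} {x₀ : X}
    (hle : ∀ x, φ x ≤ γ x) (heq : φ x₀ = γ x₀) (hx₀ : x₀ ≠ 0) :
    IsNormingFunctional γ φ x₀ := by
  refine ⟨le_antisymm (polar_le_one_of_le hγ hle) ?_, heq⟩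
  have hγx : 0 < γ x₀ := by
    rcases lt_or_eq_of_le (hγ.1 x₀) with h | h
    · exact h
    · exact absurd (hγ.2.1 x₀ h.symm) hx₀
  have hbdd : BddAbove (φ '' {x | γ x ≤ 1}) := by
    refine ⟨1, ?_⟩
    rintro z ⟨x, hx, rfl⟩
    exact (hle x).trans hx
  have hmem : φ ((γ x₀)⁻¹ • x₀) ∈ φ '' {x | γ x ≤ 1} := by
    refine ⟨(γ x₀)⁻¹ • x₀, ?_, rfl⟩
    simp only [Set.mem_setOf_eq]
    rw [hγ.2.2.1 _ _ (inv_nonneg.2 hγx.le), inv_mul_cancel₀ hγx.ne']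
  have hval : φ ((γ x₀)⁻¹ • x₀) = 1 := by
    rw [map_smul, smul_eq_mul, heq, inv_mul_cancel₀ hγx.ne']
  calc (1 : ℝ) = φ ((γ x₀)⁻¹ • x₀) := hval.symm
    _ ≤ sSup (φ '' {x | γ x ≤ 1}) := le_csSup hbdd hmem

end GaugeBasics

section GaugeFiniteDim

variable {X : Type*} [NormedAddCommGroup X] [NormedSpace ℝ X] [FiniteDimensional ℝ X]
  {γ : X → ℝ}

lemma IsGauge.continuous (hγ : IsGauge γ) : Continuous γ := by
  have hconv : ConvexOn ℝ (univ : Set X) γ := by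
    refine ⟨convex_univ, ?_⟩
    intro x _ y _ a b ha hb _
    exact hγ.combo ha hb x y
  exact continuousOn_univ.1 (hconv.continuousOn isOpen_univ)

lemma IsGauge.exists_norm_lb (hγ : IsGauge γ) : ∃ m : ℝ, 0 < m ∧ ∀ x, m * ‖x‖ ≤ γ x := by
  by_cases hsub : Subsingleton X
  · refine ⟨1, one_pos, fun x => ?_⟩
    have hx : x = 0 := Subsingleton.elim x 0
    simp [hx, hγ.zero]
  · have : Nontrivial X := not_subsingleton_iff_nontrivial.1 hsub
    have hsph : (Metric.sphere (0 : X) 1).Nonempty :=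
      NormedSpace.sphere_nonempty.2 zero_le_one
    obtain ⟨x₀, hx₀s, hx₀min⟩ :=
      (isCompact_sphere (0 : X) 1).exists_isMinOn hsph hγ.continuous.continuousOn
    have hx₀ : x₀ ≠ 0 := by
      intro hcon
      rw [mem_sphere_iff_norm, hcon, sub_zero, norm_zero] at hx₀s
      norm_num at hx₀s
    have hm : 0 < γ x₀ := by
      rcases lt_or_eq_of_le (hγ.1 x₀) with h | h
      · exact h
      · exact absurd (hγ.2.1 x₀ h.symm) hx₀
    refine ⟨γ x₀, hm, fun x => ?_⟩
    rcases eq_or_ne x 0 with rfl | hx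
    · simp [hγ.zero]
    · have hnx : 0 < ‖x‖ := norm_pos_iff.2 hx
      have hmem : ‖x‖⁻¹ • x ∈ Metric.sphere (0 : X) 1 := by
        simp [norm_smul, abs_of_nonneg (inv_nonneg.2 hnx.le), inv_mul_cancel₀ hnx.ne']
      have heq : γ (‖x‖⁻¹ • x) = ‖x‖⁻¹ * γ x := hγ.2.2.1 _ x (inv_nonneg.2 hnx.le)
      have this : γ x₀ ≤ ‖x‖⁻¹ * γ x := by
        have h5 := hx₀min hmem
        simpa [heq] using h5
      calc γ x₀ * ‖x‖ ≤ (‖x‖⁻¹ * γ x) * ‖x‖ := by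
            apply mul_le_mul_of_nonneg_right _ hnx.le
            exact this
        _ = γ x := by field_simp
  
/-- If the polar of `φ` is at most `1`, then `φ ≤ γ` pointwise. -/
lemma le_of_polar_le_one (hγ : IsGauge γ) {φ : X →ₗ[ℝ] ℝ}
    (hpol : gaugePolar γ φ ≤ 1) : ∀ x, φ x ≤ γ x := by
  obtain ⟨m, hm, hml⟩ := hγ.exists_norm_lb
  have hbdd : BddAbove (φ '' {x | γ x ≤ 1}) := by
    set C := ‖LinearMap.toContinuousLinearMap φ‖
    refine ⟨C * m⁻¹, ?_⟩
    rintro z ⟨x, hx, rfl⟩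
    have h1 : φ x ≤ C * ‖x‖ := by
      calc φ x ≤ ‖φ x‖ := le_abs_self _
        _ = ‖(LinearMap.toContinuousLinearMap φ) x‖ := rfl
        _ ≤ C * ‖x‖ := (LinearMap.toContinuousLinearMap φ).le_opNorm x
    have h2 : ‖x‖ ≤ m⁻¹ := by
      have h3 : m * ‖x‖ ≤ 1 := (hml x).trans hx
      have h4 : m * m⁻¹ = 1 := mul_inv_cancel₀ hm.ne'
      nlinarith [norm_nonneg x]
    have hC : 0 ≤ C := norm_nonneg _
    calc φ x ≤ C * ‖x‖ := h1
      _ ≤ C * m⁻¹ := mul_le_mul_of_nonneg_left h2 hC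
  intro x
  rcases eq_or_lt_of_le (hγ.1 x) with h | h
  · have hx0 : x = 0 := hγ.2.1 x h.symm
    simp [hx0, hγ.zero]
  · have hmem : φ ((γ x)⁻¹ • x) ∈ φ '' {x | γ x ≤ 1} := by
      refine ⟨(γ x)⁻¹ • x, ?_, rfl⟩
      simp only [Set.mem_setOf_eq]
      rw [hγ.2.2.1 _ _ (inv_nonneg.2 h.le), inv_mul_cancel₀ h.ne']
    have h1 : φ ((γ x)⁻¹ • x) ≤ 1 := (le_csSup hbdd hmem).trans hpol
    rw [map_smul, smul_eq_mul] at h1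
    have h2 : γ x * ((γ x)⁻¹ * φ x) ≤ γ x * 1 := mul_le_mul_of_nonneg_left h1 h.le
    rwa [← mul_assoc, mul_inv_cancel₀ h.ne', one_mul, mul_one] at h2

end GaugeFiniteDim

section Directional

variable {X : Type*} [AddCommGroup X] [Module ℝ X] {γ : X → ℝ}

/-- Difference quotient of a gauge at `x` in direction `v`. -/
noncomputable def dirQ (γ : X → ℝ) (x v : X) (t : ℝ) : ℝ := (γ (x + t • v) - γ x) / t

/-- One-sided directional derivative of a gauge at `x` in direction `v`. -/
noncomputable def dirD (γ : X → ℝ) (x v : X) : ℝ := sInf (dirQ γ x v '' Ioi 0)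

lemma IsGauge.dirQ_lb (hγ : IsGauge γ) (x v : X) {t : ℝ} (ht : 0 < t) :
    -γ (-v) ≤ dirQ γ x v t := by
  have h2 : γ (-(t • v)) = t * γ (-v) := by
    rw [← smul_neg]; exact hγ.2.2.1 t (-v) ht.le
  have h3 := hγ.2.2.2 (x + t • v) (-(t • v))
  simp only [add_neg_cancel_right] at h3
  rw [h2] at h3
  rw [dirQ, le_div_iff₀ ht]
  nlinarith
  
lemma IsGauge.dirQ_bddBelow (hγ : IsGauge γ) (x v : X) : BddBelow (dirQ γ x v '' Ioi 0) :=
  ⟨-γ (-v), by rintro z ⟨t, ht, rfl⟩; exact hγ.dirQ_lb x v ht⟩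

lemma IsGauge.dirQ_mono (hγ : IsGauge γ) (x v : X) {a b : ℝ} (ha : 0 < a) (hab : a ≤ b) :
    dirQ γ x v a ≤ dirQ γ x v b := by
  have hb : 0 < b := lt_of_lt_of_le ha hab
  have hcombo : γ (x + a • v) ≤ (a / b) * γ (x + b • v) + (1 - a / b) * γ x := by
    have hxeq : x + a • v = (a / b) • (x + b • v) + (1 - a / b) • x := by
      rw [smul_add, smul_smul, div_mul_cancel₀ _ hb.ne']
      rw [sub_smul, one_smul]
      abel
    rw [hxeq]
    exact hγ.combo (div_nonneg ha.le hb.le) (by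
      have : a / b ≤ 1 := (div_le_one hb).2 hab
      linarith) _ _
  rw [dirQ, dirQ, div_le_div_iff₀ ha hb]
  have h6 : γ (x + a • v) - γ x ≤ (a / b) * (γ (x + b • v) - γ x) := by linarith [hcombo]
  have h7 := mul_le_mul_of_nonneg_right h6 hb.le
  have h8 : a / b * (γ (x + b • v) - γ x) * b = (γ (x + b • v) - γ x) * a := by
    field_simp
  rw [h8] at h7
  linarith
  
lemma IsGauge.dirD_le_dirQ (hγ : IsGauge γ) (x v : X) {t : ℝ} (ht : 0 < t) :
    dirD γ x v ≤ dirQ γ x v t :=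
  csInf_le (hγ.dirQ_bddBelow x v) ⟨t, ht, rfl⟩

lemma IsGauge.dirD_le (hγ : IsGauge γ) (x v : X) :
    dirD γ x v ≤ γ (x + v) - γ x := by
  have := hγ.dirD_le_dirQ x v one_pos
  simpa [dirQ] using this

lemma IsGauge.dirD_hom (hγ : IsGauge γ) (x : X) (c : ℝ) (hc : 0 < c) (v : X) :
    dirD γ x (c • v) = c * dirD γ x v := by
  have himg : dirQ γ x (c • v) '' Ioi 0 = c • (dirQ γ x v '' Ioi 0) := by
    ext z
    constructor
    · rintro ⟨t, ht, rfl⟩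
      refine ⟨dirQ γ x v (t * c), ⟨t * c, mul_pos ht hc, rfl⟩, ?_⟩
      show c • ((γ (x + (t * c) • v) - γ x) / (t * c)) = (γ (x + t • (c • v)) - γ x) / t
      have ht' : (t : ℝ) ≠ 0 := ne_of_gt ht
      rw [smul_smul, mul_comm t c, smul_eq_mul]
      field_simp
    · rintro ⟨z, ⟨s, hs, rfl⟩, rfl⟩
      refine ⟨s / c, div_pos hs hc, ?_⟩
      show (γ (x + (s / c) • (c • v)) - γ x) / (s / c) = c • ((γ (x + s • v) - γ x) / s)
      have hs' : (s : ℝ) ≠ 0 := ne_of_gt hs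
      rw [smul_smul, div_mul_cancel₀ _ hc.ne', smul_eq_mul]
      field_simp
  rw [dirD, dirD, himg, Real.sInf_smul_of_nonneg hc.le, smul_eq_mul]

lemma IsGauge.dirD_add (hγ : IsGauge γ) (x v w : X) :
    dirD γ x (v + w) ≤ dirD γ x v + dirD γ x w := by
  refine le_of_forall_pos_le_add ?_
  intro ε hε
  have hε2 : 0 < ε / 2 := by linarith
  obtain ⟨z1, ⟨t1, ht1, rfl⟩, hz1⟩ := exists_lt_of_csInf_lt
    (⟨dirQ γ x v 1, 1, by norm_num, rfl⟩ : (dirQ γ x v '' Ioi 0).Nonempty)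
    (lt_add_of_pos_right (dirD γ x v) hε2)
  obtain ⟨z2, ⟨t2, ht2, rfl⟩, hz2⟩ := exists_lt_of_csInf_lt
    (⟨dirQ γ x w 1, 1, by norm_num, rfl⟩ : (dirQ γ x w '' Ioi 0).Nonempty)
    (lt_add_of_pos_right (dirD γ x w) hε2)
  set t := min t1 t2 / 2 with htdef
  have hmin : 0 < min t1 t2 := lt_min ht1 ht2
  have ht : 0 < t := by rw [htdef]; exact div_pos hmin two_pos
  have h2t : 0 < 2 * t := by linarith
  have key : dirQ γ x (v + w) t ≤ dirQ γ x v (2 * t) + dirQ γ x w (2 * t) := by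
    have hxeq : x + t • (v + w) =
        (1 / 2 : ℝ) • (x + (2 * t) • v) + (1 / 2 : ℝ) • (x + (2 * t) • w) := by
      module
    have hcombo : γ (x + t • (v + w)) ≤
        (1 / 2 : ℝ) * γ (x + (2 * t) • v) + (1 / 2 : ℝ) * γ (x + (2 * t) • w) := by
      rw [hxeq]
      exact hγ.combo (by norm_num) (by norm_num) _ _
    rw [dirQ, dirQ, dirQ, ← add_div, div_le_div_iff₀ ht h2t]
    nlinarith
  have hmono1 : dirQ γ x v (2 * t) ≤ dirQ γ x v t1 := by
    refine hγ.dirQ_mono x v h2t ?_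
    rw [htdef]; rw [mul_div_cancel₀ _ (two_ne_zero)]; exact min_le_left _ _
  have hmono2 : dirQ γ x w (2 * t) ≤ dirQ γ x w t2 := by
    refine hγ.dirQ_mono x w h2t ?_
    rw [htdef]; rw [mul_div_cancel₀ _ (two_ne_zero)]; exact min_le_right _ _
  have hD := hγ.dirD_le_dirQ x (v + w) ht
  have : dirD γ x (v + w) ≤ dirD γ x v + ε / 2 + (dirD γ x w + ε / 2) := by
    calc dirD γ x (v + w) ≤ dirQ γ x (v + w) t := hD
      _ ≤ dirQ γ x v (2 * t) + dirQ γ x w (2 * t) := key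
      _ ≤ dirQ γ x v t1 + dirQ γ x w t2 := add_le_add hmono1 hmono2
      _ ≤ _ := add_le_add hz1.le hz2.le
  linarith

end Directional

/-- A point `p j` minimizes `x ↦ ∑ γ(pᵢ - x)` iff for each `i ≠ j` there is a
`γ`-norming functional `φᵢ` of `pᵢ - p j` with `γ°(-∑_{i≠j} φᵢ) ≤ 1`. -/
theorem fermatTorricelli_minimum_at_given_point_iff
    {X : Type*} [NormedAddCommGroup X] [NormedSpace ℝ X] [FiniteDimensional ℝ X]
    (γ : X → ℝ) (hγ : IsGauge γ) {n : ℕ} (p : Fin n → X)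
    (hp : Function.Injective p) (j : Fin n) :
    (∀ y : X, ∑ i, γ (p i - p j) ≤ ∑ i, γ (p i - y)) ↔
      ∃ φ : Fin n → (X →ₗ[ℝ] ℝ),
        (∀ i, i ≠ j → IsNormingFunctional γ (φ i) (p i - p j)) ∧
        gaugePolar γ (-(∑ i ∈ Finset.univ.erase j, φ i)) ≤ 1 := by
  classical
  constructor
  · -- necessity
    intro hmin
    have key : ∀ v : X, -γ v ≤ ∑ i ∈ Finset.univ.erase j, (γ ((p i - p j) + v) - γ (p i - p j)) := by
      intro v
      have h1 : ∑ i, γ (p i - p j) ≤ ∑ i, γ ((p i - p j) + v) := by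
        calc ∑ i, γ (p i - p j) ≤ ∑ i, γ (p i - (p j - v)) := hmin (p j - v)
          _ = ∑ i, γ ((p i - p j) + v) := Finset.sum_congr rfl fun i _ => by
              congr 1; abel
      rw [← Finset.sum_erase_add _ _ (Finset.mem_univ j),
          ← Finset.sum_erase_add _ (fun i => γ ((p i - p j) + v)) (Finset.mem_univ j)] at h1
      rw [sub_self, hγ.zero, zero_add] at h1
      rw [Finset.sum_sub_distrib]
      linarith
    -- lower bound for the sum of directional derivatives
    have hsum : ∀ v : X, -γ v ≤ ∑ i ∈ Finset.univ.erase j, dirD γ (p i - p j) v := by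
      intro v
      refine le_of_forall_pos_le_add ?_
      intro ε hε
      set c := (Finset.univ.erase j).card with hc
      have hε' : 0 < ε / (c + 1) := by positivity
      obtain ⟨t, ht, hts⟩ := exists_forall_le_sInf_add (Finset.univ.erase j)
        (fun i => dirQ γ (p i - p j) v)
        (fun i _ a b ha hab => hγ.dirQ_mono (p i - p j) v ha hab) _ hε'
      have h1 : -γ v ≤ ∑ i ∈ Finset.univ.erase j, dirQ γ (p i - p j) v t := by
        have h2 := key (t • v)
        have h3 : γ (t • v) = t * γ v := hγ.2.2.1 t v ht.le
        have h4 : ∑ i ∈ Finset.univ.erase j, dirQ γ (p i - p j) v t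
            = (∑ i ∈ Finset.univ.erase j, (γ ((p i - p j) + t • v) - γ (p i - p j))) / t := by
          rw [Finset.sum_div]; rfl
        rw [h4, le_div_iff₀ ht]
        nlinarith
      have h5 : ∑ i ∈ Finset.univ.erase j, dirQ γ (p i - p j) v t
          ≤ ∑ i ∈ Finset.univ.erase j, (dirD γ (p i - p j) v + ε / (c + 1)) := by
        refine Finset.sum_le_sum fun i hi => ?_
        exact hts i hi
      rw [Finset.sum_add_distrib, Finset.sum_const, ← hc, nsmul_eq_mul] at h5
      have h6 : (c : ℝ) * (ε / (c + 1)) ≤ ε := by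
        have h7 : ((c : ℝ) + 1) * (ε / (c + 1)) = ε := by
          field_simp
        nlinarith [hε'.le]
      linarith
    obtain ⟨φ, hφ1, hφ2⟩ := gauge_sumrule (Finset.univ.erase j) (fun i => dirD γ (p i - p j))
      (fun i _ => hγ.dirD_add (p i - p j))
      (fun i _ c hc v => hγ.dirD_hom (p i - p j) c hc v)
      (fun v => -γ v)
      (fun a b => by have := hγ.2.2.2 a b; linarith)
      (fun c hc v => by rw [hγ.2.2.1 c v hc.le]; ring)
      hsum
    have hle_i : ∀ i ∈ Finset.univ.erase j, ∀ w, (φ i) w ≤ γ w := by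
      intro i hi w
      have h1 := hφ1 i hi w
      have h2 := hγ.dirD_le (p i - p j) w
      have h3 := hγ.2.2.2 (p i - p j) w
      linarith
    have heq_i : ∀ i ∈ Finset.univ.erase j, (φ i) (p i - p j) = γ (p i - p j) := by
      intro i hi
      refine le_antisymm (hle_i i hi _) ?_
      have h1 := hφ1 i hi (-(p i - p j))
      have h2 := hγ.dirD_le (p i - p j) (-(p i - p j))
      rw [add_neg_cancel, hγ.zero] at h2
      have h3 : (φ i) (-(p i - p j)) = -((φ i) (p i - p j)) := map_neg _ _
      linarith
    refine ⟨φ, ?_, ?_⟩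
    · intro i hij
      have hi : i ∈ Finset.univ.erase j := Finset.mem_erase.2 ⟨hij, Finset.mem_univ i⟩
      have hxne : p i - p j ≠ 0 := sub_ne_zero.2 fun hcon => hij (hp hcon)
      exact isNormingFunctional_of hγ (hle_i i hi) (heq_i i hi) hxne
    · refine polar_le_one_of_le hγ ?_
      intro w
      have h1 := hφ2 w
      have h2 : ((∑ i ∈ Finset.univ.erase j, φ i) : X →ₗ[ℝ] ℝ) w
          = ∑ i ∈ Finset.univ.erase j, (φ i) w := by
        simp
      rw [LinearMap.neg_apply, h2]
      linarith
  · -- sufficiency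
    rintro ⟨φ, hnorm, hpol⟩ y
    have hple : ∀ i, i ≠ j → ∀ w, (φ i) w ≤ γ w := fun i hij =>
      le_of_polar_le_one hγ (le_of_eq (hnorm i hij).1)
    have hneg := le_of_polar_le_one hγ hpol
    have hsum_apply : ∀ w : X, ((∑ i ∈ Finset.univ.erase j, φ i) : X →ₗ[ℝ] ℝ) w
        = ∑ i ∈ Finset.univ.erase j, (φ i) w := by
      intro w; simp
    have hB : ∑ i ∈ Finset.univ.erase j, (φ i) (y - p j) ≤ γ (p j - y) := by
      have h1 := hneg (p j - y)
      rw [LinearMap.neg_apply, hsum_apply] at h1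
      have h2 : ∑ i ∈ Finset.univ.erase j, (φ i) (y - p j)
          = -∑ i ∈ Finset.univ.erase j, (φ i) (p j - y) := by
        rw [← Finset.sum_neg_distrib]
        refine Finset.sum_congr rfl fun i _ => ?_
        rw [← map_neg, neg_sub]
      rw [h2]
      linarith
    have hA : ∑ i ∈ Finset.univ.erase j, (φ i) (p i - y)
        ≤ ∑ i ∈ Finset.univ.erase j, γ (p i - y) :=
      Finset.sum_le_sum fun i hi => hple i (Finset.mem_erase.1 hi).1 _
    calc ∑ i, γ (p i - p j) = ∑ i ∈ Finset.univ.erase j, γ (p i - p j) := by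
          rw [← Finset.sum_erase_add _ _ (Finset.mem_univ j), sub_self, hγ.zero, add_zero]
      _ = ∑ i ∈ Finset.univ.erase j, (φ i) (p i - p j) :=
          Finset.sum_congr rfl fun i hi => ((hnorm i (Finset.mem_erase.1 hi).1).2).symm
      _ = ∑ i ∈ Finset.univ.erase j, ((φ i) (p i - y) + (φ i) (y - p j)) :=
          Finset.sum_congr rfl fun i hi => by
            rw [← map_add]; congr 1; abel
      _ = ∑ i ∈ Finset.univ.erase j, (φ i) (p i - y)
          + ∑ i ∈ Finset.univ.erase j, (φ i) (y - p j) := Finset.sum_add_distrib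
      _ ≤ ∑ i ∈ Finset.univ.erase j, γ (p i - y) + γ (p j - y) := add_le_add hA hB
      _ = ∑ i, γ (p i - y) := Finset.sum_erase_add _ _ (Finset.mem_univ j)
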